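/- Let q, a, b be positive integers with gcd(a,b) = 1, let α, β, γ, δ ∈ ℂ with |Re(c)| < 1/4 for each c ∈ {α,β,γ,δ}, and let 𝒢 be an even entire function with 𝒢(0) = 1 which has exponential decay in every vertical strip |Re(s)| ≤ C. Then ∑_{m,n ≥ 1, ma = nb} σ_{α,β}(m) σ_{γ,δ}(n) (mn)^{−1/2} V_{α,β,γ,δ}(mn/q²) = (1/(2πi)) ∫_{Re(s)=2} (𝒢(s)/s) g_{α,β,γ,δ}(s) q^{2s} Z_{α,β,γ,δ}(a,b,s) ds, where the left-hand double series and the series defining Z on the contour converge absolutely. -/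

import Mathlib

open Complex MeasureTheory

/-- `σ_{α,β}(n) = ∑_{ad=n} a^{-α} d^{-β}`. -/
noncomputable def sigmaC (α β : ℂ) (n : ℕ) : ℂ :=
  ∑ d ∈ n.divisors, ((n / d : ℕ) : ℂ) ^ (-α) * (d : ℂ) ^ (-β)

/-- `g_{α,β,γ,δ}(s)`. -/
noncomputable def gfun (α β γ δ s : ℂ) : ℂ :=
  (Real.pi : ℂ) ^ (-2 * s) *
    (Complex.Gamma ((1/2 + α + s)/2) * Complex.Gamma ((1/2 + β + s)/2) *
      Complex.Gamma ((1/2 + γ + s)/2) * Complex.Gamma ((1/2 + δ + s)/2)) /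
    (Complex.Gamma ((1/2 + α)/2) * Complex.Gamma ((1/2 + β)/2) *
      Complex.Gamma ((1/2 + γ)/2) * Complex.Gamma ((1/2 + δ)/2))

/-- `V_{α,β,γ,δ}(x) = (1/(2πi)) ∫_{Re(s)=2} (𝒢(s)/s) g_{α,β,γ,δ}(s) x^{−s} ds`. -/
noncomputable def Vfun (G : ℂ → ℂ) (α β γ δ : ℂ) (x : ℝ) : ℂ :=
  (1 / (2 * (Real.pi : ℂ) * I)) *
    (I * ∫ t : ℝ, (G (2 + t * I) / (2 + t * I)) * gfun α β γ δ (2 + t * I) *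
      (x : ℂ) ^ (-(2 + t * I)))

/-- `𝒢` has exponential decay in every vertical strip `|Re(s)| ≤ C`. -/
def ExpDecayStrips (G : ℂ → ℂ) : Prop :=
  ∀ C > (0 : ℝ), ∃ A > (0 : ℝ), ∃ c > (0 : ℝ),
    ∀ s : ℂ, |s.re| ≤ C → ‖G s‖ ≤ A * Real.exp (-c * |s.im|)

/-- Term of the Dirichlet series `Z_{α,β,γ,δ}(a,b,s)`. -/
noncomputable def Zterm (α β γ δ : ℂ) (a b : ℕ) (s : ℂ) (n : ℕ) : ℂ :=
  sigmaC α β (b * n) * sigmaC γ δ (a * n) *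
    (a : ℂ) ^ (-(1/2 + s)) * (b : ℂ) ^ (-(1/2 + s)) * (n : ℂ) ^ (-(1 + 2 * s))

/- ### Auxiliary lemmas -/

section Aux

open Set Filter

lemma myNormGammaLe {z : ℂ} (hz : 0 < z.re) : ‖Complex.Gamma z‖ ≤ Real.Gamma z.re := by
  rw [Complex.Gamma_eq_integral hz, Real.Gamma_eq_integral hz, Complex.GammaIntegral]
  refine (norm_integral_le_integral_norm _).trans_eq ?_
  refine setIntegral_congr_fun measurableSet_Ioi fun x hx => ?_
  rw [norm_mul, Complex.norm_real, Real.norm_eq_abs, abs_of_pos (Real.exp_pos _),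
    Complex.norm_cpow_eq_rpow_re_of_pos hx]
  simp [Complex.sub_re]

lemma myIntegrableExp {c : ℝ} (hc : 0 < c) :
    Integrable (fun t : ℝ => Real.exp (-c * |t|)) := by
  have hIoi : IntegrableOn (fun t : ℝ => Real.exp (-c * |t|)) (Ioi 0) := by
    refine (exp_neg_integrableOn_Ioi 0 hc).congr_fun (fun x hx => ?_) measurableSet_Ioi
    rw [abs_of_pos hx]
  rw [← integrableOn_univ, ← @Iio_union_Ici _ _ (0 : ℝ), integrableOn_union,
    integrableOn_Ici_iff_integrableOn_Ioi]
  refine ⟨?_, hIoi⟩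
  rw [← (Measure.measurePreserving_neg (volume : Measure ℝ)).integrableOn_comp_preimage
      (Homeomorph.neg ℝ).measurableEmbedding]
  simp only [Function.comp_def, abs_neg, neg_preimage, neg_Iio, neg_zero]
  exact hIoi

lemma ne_neg_nat_of_re_pos {z : ℂ} (hz : 0 < z.re) (m : ℕ) : z ≠ -(m:ℂ) := by
  intro h
  rw [h] at hz
  simp only [Complex.neg_re, Complex.natCast_re] at hz
  have : (0:ℝ) ≤ (m:ℝ) := Nat.cast_nonneg m
  linarith

lemma sigmaC_bound {α β : ℂ} (hα : |α.re| < 1/4) (hβ : |β.re| < 1/4) (m : ℕ) :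
    ‖sigmaC α β m‖ ≤ (m : ℝ) ^ (3/2 : ℝ) := by
  rcases Nat.eq_zero_or_pos m with rfl | hm
  · simp [sigmaC, Real.zero_rpow (by norm_num : (3/2:ℝ) ≠ 0)]
  have hm0' : (0:ℝ) < m := by exact_mod_cast hm
  refine (norm_sum_le _ _).trans ?_
  have hterm : ∀ d ∈ m.divisors, ‖((m / d : ℕ) : ℂ) ^ (-α) * (d : ℂ) ^ (-β)‖ ≤ (m:ℝ)^(1/2:ℝ) := by
    intro d hd
    obtain ⟨hdvd, -⟩ := Nat.mem_divisors.mp hd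
    have hd0 : 0 < d := Nat.pos_of_mem_divisors hd
    have hq0 : 0 < m / d := Nat.div_pos (Nat.le_of_dvd hm hdvd) hd0
    have hqle : ((m / d : ℕ) : ℝ) ≤ (m : ℝ) := by exact_mod_cast Nat.div_le_self m d
    have hdle : ((d : ℕ) : ℝ) ≤ (m : ℝ) := by exact_mod_cast Nat.le_of_dvd hm hdvd
    rw [norm_mul, norm_natCast_cpow_of_pos hq0, norm_natCast_cpow_of_pos hd0]
    have key : ∀ (x : ℝ) (e : ℝ), 1 ≤ x → x ≤ m → e ≤ 1/4 → x ^ e ≤ (m:ℝ)^(1/4:ℝ) := by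
      intro x e hx hxm he
      calc x ^ e ≤ x ^ (1/4:ℝ) := Real.rpow_le_rpow_of_exponent_le hx he
        _ ≤ (m:ℝ) ^ (1/4:ℝ) := Real.rpow_le_rpow (by linarith) hxm (by norm_num)
    have h1 : ((m / d : ℕ) : ℝ) ^ (-α).re ≤ (m:ℝ)^(1/4:ℝ) := by
      refine key _ _ (by exact_mod_cast hq0) hqle ?_
      have := abs_lt.mp hα
      simp only [Complex.neg_re]; linarith [this.1]
    have h2 : ((d : ℕ) : ℝ) ^ (-β).re ≤ (m:ℝ)^(1/4:ℝ) := by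
      refine key _ _ (by exact_mod_cast hd0) hdle ?_
      have := abs_lt.mp hβ
      simp only [Complex.neg_re]; linarith [this.1]
    calc ((m / d : ℕ) : ℝ) ^ (-α).re * ((d : ℕ) : ℝ) ^ (-β).re
        ≤ (m:ℝ)^(1/4:ℝ) * (m:ℝ)^(1/4:ℝ) :=
          mul_le_mul h1 h2 (Real.rpow_nonneg (by positivity) _) (by positivity)
      _ = (m:ℝ)^(1/2:ℝ) := by rw [← Real.rpow_add hm0']; norm_num
  refine (Finset.sum_le_sum hterm).trans ?_
  rw [Finset.sum_const, nsmul_eq_mul]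
  have hcard : (m.divisors.card : ℝ) ≤ (m : ℝ) := by
    have : m.divisors.card ≤ (Finset.Icc 1 m).card := by
      apply Finset.card_le_card
      intro d hd
      rw [Finset.mem_Icc]
      exact ⟨Nat.pos_of_mem_divisors hd, Nat.le_of_dvd hm (Nat.mem_divisors.mp hd).1⟩
    rw [Nat.card_Icc] at this
    exact_mod_cast this.trans (by omega)
  calc (m.divisors.card : ℝ) * (m:ℝ)^(1/2:ℝ)
      ≤ (m:ℝ) * (m:ℝ)^(1/2:ℝ) := mul_le_mul_of_nonneg_right hcard (Real.rpow_nonneg hm0'.le _)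
    _ = (m:ℝ)^(3/2:ℝ) := by
        rw [show (3/2:ℝ) = 1 + 1/2 by norm_num, Real.rpow_add hm0', Real.rpow_one]

lemma cpow_key {A B K Q : ℝ} (hA : 0 < A) (hB : 0 < B) (hK : 0 < K) (hQ : 0 < Q) (s : ℂ) :
    ((B * K * (A * K) : ℝ) : ℂ) ^ (-(1:ℂ)/2) * (((B * K * (A * K)) / Q^2 : ℝ) : ℂ) ^ (-s) =
    (Q : ℂ) ^ (2*s) * (((A:ℝ) : ℂ) ^ (-(1/2+s)) * ((B:ℝ) : ℂ) ^ (-(1/2+s)) *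
      ((K:ℝ) : ℂ) ^ (-(1+2*s))) := by
  have hN : (0:ℝ) < B * K * (A * K) := by positivity
  have hx : (0:ℝ) < B * K * (A * K) / Q ^ 2 := by positivity
  rw [Complex.cpow_def_of_ne_zero (by exact_mod_cast hN.ne'),
    Complex.cpow_def_of_ne_zero (by exact_mod_cast hx.ne'),
    Complex.cpow_def_of_ne_zero (by exact_mod_cast hQ.ne'),
    Complex.cpow_def_of_ne_zero (by exact_mod_cast hA.ne'),
    Complex.cpow_def_of_ne_zero (by exact_mod_cast hB.ne'),
    Complex.cpow_def_of_ne_zero (by exact_mod_cast hK.ne'),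
    ← Complex.ofReal_log hN.le, ← Complex.ofReal_log hx.le, ← Complex.ofReal_log hQ.le,
    ← Complex.ofReal_log hA.le, ← Complex.ofReal_log hB.le, ← Complex.ofReal_log hK.le,
    ← Complex.exp_add, ← Complex.exp_add, ← Complex.exp_add, ← Complex.exp_add]
  congr 1
  rw [Real.log_div hN.ne' (by positivity), Real.log_mul (by positivity) (by positivity),
    Real.log_mul hB.ne' hK.ne', Real.log_mul hA.ne' hK.ne', Real.log_pow]
  push_cast
  ring

lemma Zterm_bound {α β γ δ : ℂ} (hα : |α.re| < 1/4) (hβ : |β.re| < 1/4) (hγ : |γ.re| < 1/4)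
    (hδ : |δ.re| < 1/4) {a b : ℕ} (ha : 0 < a) (hb : 0 < b) (t : ℝ) (n : ℕ) :
    ‖Zterm α β γ δ a b (2 + t*I) n‖ ≤
      ((a:ℝ)^(3/2:ℝ) * (b:ℝ)^(3/2:ℝ) * (a:ℝ)^(-(5/2):ℝ) * (b:ℝ)^(-(5/2):ℝ)) * (n:ℝ)^(-2:ℝ) := by
  have ha' : (0:ℝ) < (a:ℝ) := by exact_mod_cast ha
  have hb' : (0:ℝ) < (b:ℝ) := by exact_mod_cast hb
  rcases Nat.eq_zero_or_pos n with rfl | hn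
  · have hz : Zterm α β γ δ a b (2 + t*I) 0 = 0 := by simp [Zterm, sigmaC]
    rw [hz, norm_zero, Nat.cast_zero, Real.zero_rpow (by norm_num : (-2:ℝ) ≠ 0), mul_zero]
  · have hn' : (0:ℝ) < (n:ℝ) := by exact_mod_cast hn
    have hre1 : (-(1/2 + (2 + (t:ℝ)*I))).re = -(5/2:ℝ) := by
      simp [Complex.div_re, Complex.normSq_apply]; norm_num
    have hre2 : (-(1 + 2*(2 + (t:ℝ)*I))).re = -(5:ℝ) := by
      simp; norm_num
    have e1 : ‖(a:ℂ)^(-(1/2 + (2 + (t:ℝ)*I)))‖ = (a:ℝ)^(-(5/2):ℝ) := by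
      rw [norm_natCast_cpow_of_pos ha, hre1]
    have e2 : ‖(b:ℂ)^(-(1/2 + (2 + (t:ℝ)*I)))‖ = (b:ℝ)^(-(5/2):ℝ) := by
      rw [norm_natCast_cpow_of_pos hb, hre1]
    have e3 : ‖(n:ℂ)^(-(1 + 2*(2 + (t:ℝ)*I)))‖ = (n:ℝ)^(-(5):ℝ) := by
      rw [norm_natCast_cpow_of_pos hn, hre2]
    have s1 := sigmaC_bound hα hβ (b*n)
    have s2 := sigmaC_bound hγ hδ (a*n)
    calc ‖Zterm α β γ δ a b (2 + t*I) n‖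
        = ‖sigmaC α β (b*n)‖ * ‖sigmaC γ δ (a*n)‖ * (a:ℝ)^(-(5/2):ℝ) * (b:ℝ)^(-(5/2):ℝ) *
          (n:ℝ)^(-(5):ℝ) := by
          simp only [Zterm, norm_mul, e1, e2, e3]
      _ ≤ ((b*n:ℕ):ℝ)^(3/2:ℝ) * ((a*n:ℕ):ℝ)^(3/2:ℝ) * (a:ℝ)^(-(5/2):ℝ) * (b:ℝ)^(-(5/2):ℝ) *
          (n:ℝ)^(-(5):ℝ) := by gcongr
      _ = ((a:ℝ)^(3/2:ℝ) * (b:ℝ)^(3/2:ℝ) * (a:ℝ)^(-(5/2):ℝ) * (b:ℝ)^(-(5/2):ℝ)) * (n:ℝ)^(-2:ℝ) := by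
          push_cast
          rw [Real.mul_rpow hb'.le hn'.le, Real.mul_rpow ha'.le hn'.le]
          rw [show (b:ℝ)^(3/2:ℝ) * (n:ℝ)^(3/2:ℝ) * ((a:ℝ)^(3/2:ℝ) * (n:ℝ)^(3/2:ℝ)) *
              (a:ℝ)^(-(5/2):ℝ) * (b:ℝ)^(-(5/2):ℝ) * (n:ℝ)^(-(5):ℝ)
             = ((a:ℝ)^(3/2:ℝ) * (b:ℝ)^(3/2:ℝ) * (a:ℝ)^(-(5/2):ℝ) * (b:ℝ)^(-(5/2):ℝ)) *
               ((n:ℝ)^(3/2:ℝ) * (n:ℝ)^(3/2:ℝ) * (n:ℝ)^(-(5):ℝ)) from by ring]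
          congr 1
          rw [← Real.rpow_add hn', ← Real.rpow_add hn']
          norm_num

lemma key_identity {a b q : ℕ} (ha : 0 < a) (hb : 0 < b) (hq : 0 < q) (α β γ δ : ℂ) (k : ℕ)
    (s : ℂ) :
    sigmaC α β (b*k) * sigmaC γ δ (a*k) * ((b*k*(a*k) : ℕ) : ℂ) ^ (-(1:ℂ)/2) *
      ((((b*k*(a*k) : ℕ) : ℝ) / (q:ℝ)^2 : ℝ) : ℂ) ^ (-s) =
    (q:ℂ)^(2*s) * Zterm α β γ δ a b s k := by
  rcases Nat.eq_zero_or_pos k with rfl | hk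
  · simp [Zterm, sigmaC]
  · have hckey := cpow_key (A := (a:ℝ)) (B := (b:ℝ)) (K := (k:ℝ)) (Q := (q:ℝ))
      (by exact_mod_cast ha) (by exact_mod_cast hb) (by exact_mod_cast hk) (by exact_mod_cast hq) s
    rw [Zterm]
    push_cast at hckey ⊢
    linear_combination (sigmaC α β (b*k) * sigmaC γ δ (a*k)) * hckey

noncomputable def CgBound (α β γ δ : ℂ) : ℝ :=
  Real.pi ^ (-4 : ℝ) *
    (Real.Gamma ((5/2 + α.re)/2) * Real.Gamma ((5/2 + β.re)/2) *
     Real.Gamma ((5/2 + γ.re)/2) * Real.Gamma ((5/2 + δ.re)/2)) /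
    ‖Complex.Gamma ((1/2 + α)/2) * Complex.Gamma ((1/2 + β)/2) *
      Complex.Gamma ((1/2 + γ)/2) * Complex.Gamma ((1/2 + δ)/2)‖

lemma CgBound_nonneg (α β γ δ : ℂ) (hα : -(1/4) < α.re) (hβ : -(1/4) < β.re)
    (hγ : -(1/4) < γ.re) (hδ : -(1/4) < δ.re) : 0 ≤ CgBound α β γ δ := by
  have g1 : 0 < Real.Gamma ((5/2 + α.re)/2) := Real.Gamma_pos_of_pos (by linarith)
  have g2 : 0 < Real.Gamma ((5/2 + β.re)/2) := Real.Gamma_pos_of_pos (by linarith)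
  have g3 : 0 < Real.Gamma ((5/2 + γ.re)/2) := Real.Gamma_pos_of_pos (by linarith)
  have g4 : 0 < Real.Gamma ((5/2 + δ.re)/2) := Real.Gamma_pos_of_pos (by linarith)
  have hpi : (0:ℝ) < Real.pi ^ (-4:ℝ) := Real.rpow_pos_of_pos Real.pi_pos _
  unfold CgBound
  apply div_nonneg _ (norm_nonneg _)
  have := mul_pos (mul_pos (mul_pos g1 g2) g3) g4
  nlinarith

lemma norm_gfun_le (α β γ δ : ℂ) (hα : -(1/4) < α.re) (hβ : -(1/4) < β.re)
    (hγ : -(1/4) < γ.re) (hδ : -(1/4) < δ.re) (t : ℝ) :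
    ‖gfun α β γ δ (2 + t*I)‖ ≤ CgBound α β γ δ := by
  have hpi : ‖(Real.pi : ℂ) ^ (-2 * (2 + (t:ℝ)*I))‖ = Real.pi ^ (-4:ℝ) := by
    rw [Complex.norm_cpow_eq_rpow_re_of_pos Real.pi_pos]
    congr 1
    simp; norm_num
  have hone : ∀ w : ℂ, -(1/4) < w.re →
      ‖Complex.Gamma ((1/2 + w + (2 + (t:ℝ)*I))/2)‖ ≤ Real.Gamma ((5/2 + w.re)/2) := by
    intro w hw
    have hre : ((1/2 + w + (2 + (t:ℝ)*I))/2).re = (5/2 + w.re)/2 := by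
      simp [Complex.div_re, Complex.normSq_apply]; ring
    rw [← hre]
    exact myNormGammaLe (by rw [hre]; linarith)
  have h1 := hone α hα
  have h2 := hone β hβ
  have h3 := hone γ hγ
  have h4 := hone δ hδ
  have g1 : 0 < Real.Gamma ((5/2 + α.re)/2) := Real.Gamma_pos_of_pos (by linarith)
  have g2 : 0 < Real.Gamma ((5/2 + β.re)/2) := Real.Gamma_pos_of_pos (by linarith)
  have g3 : 0 < Real.Gamma ((5/2 + γ.re)/2) := Real.Gamma_pos_of_pos (by linarith)
  have g4 : 0 < Real.Gamma ((5/2 + δ.re)/2) := Real.Gamma_pos_of_pos (by linarith)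
  have hD : 0 < ‖Complex.Gamma ((1/2 + α)/2) * Complex.Gamma ((1/2 + β)/2) *
      Complex.Gamma ((1/2 + γ)/2) * Complex.Gamma ((1/2 + δ)/2)‖ := by
    have hne : ∀ w : ℂ, -(1/4) < w.re → Complex.Gamma ((1/2 + w)/2) ≠ 0 := by
      intro w hw
      apply Complex.Gamma_ne_zero
      intro m
      refine ne_neg_nat_of_re_pos ?_ m
      have hre : ((1/2 + w)/2).re = (1/2 + w.re)/2 := by
        simp [Complex.div_re, Complex.normSq_apply]
      rw [hre]; linarith
    rw [norm_pos_iff]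
    exact mul_ne_zero (mul_ne_zero (mul_ne_zero (hne α hα) (hne β hβ)) (hne γ hγ)) (hne δ hδ)
  rw [gfun, norm_div, norm_mul, hpi]
  unfold CgBound
  rw [div_le_div_iff_of_pos_right hD]
  apply mul_le_mul_of_nonneg_left _ (Real.rpow_pos_of_pos Real.pi_pos _).le
  calc ‖Complex.Gamma ((1/2 + α + (2 + (t:ℝ)*I))/2) * Complex.Gamma ((1/2 + β + (2 + (t:ℝ)*I))/2) *
      Complex.Gamma ((1/2 + γ + (2 + (t:ℝ)*I))/2) * Complex.Gamma ((1/2 + δ + (2 + (t:ℝ)*I))/2)‖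
      = ‖Complex.Gamma ((1/2 + α + (2 + (t:ℝ)*I))/2)‖ * ‖Complex.Gamma ((1/2 + β + (2 + (t:ℝ)*I))/2)‖ *
        ‖Complex.Gamma ((1/2 + γ + (2 + (t:ℝ)*I))/2)‖ * ‖Complex.Gamma ((1/2 + δ + (2 + (t:ℝ)*I))/2)‖ := by
        rw [norm_mul, norm_mul, norm_mul]
    _ ≤ Real.Gamma ((5/2 + α.re)/2) * Real.Gamma ((5/2 + β.re)/2) *
        Real.Gamma ((5/2 + γ.re)/2) * Real.Gamma ((5/2 + δ.re)/2) :=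
        mul_le_mul (mul_le_mul (mul_le_mul h1 h2 (norm_nonneg _) g1.le) h3
          (norm_nonneg _) (by positivity)) h4 (norm_nonneg _) (by positivity)

lemma gfun_continuous (α β γ δ : ℂ) (hα : -(1/4) < α.re) (hβ : -(1/4) < β.re)
    (hγ : -(1/4) < γ.re) (hδ : -(1/4) < δ.re) :
    Continuous (fun t : ℝ => gfun α β γ δ (2 + t*I)) := by
  have hGam : ∀ w : ℂ, -(1/4) < w.re →
      Continuous (fun t : ℝ => Complex.Gamma ((1/2 + w + (2 + (t:ℝ)*I))/2)) := by
    intro w hw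
    rw [continuous_iff_continuousAt]
    intro t
    have harg : Continuous (fun t : ℝ => (1/2 + w + (2 + (t:ℝ)*I))/2) := by
      apply Continuous.div_const
      exact continuous_const.add (continuous_const.add (Complex.continuous_ofReal.mul continuous_const))
    refine ContinuousAt.comp ?_ harg.continuousAt
    refine (Complex.differentiableAt_Gamma _ (fun m => ?_)).continuousAt
    refine ne_neg_nat_of_re_pos ?_ m
    have hre : ((1/2 + w + (2 + (t:ℝ)*I))/2).re = (5/2 + w.re)/2 := by
      simp [Complex.div_re, Complex.normSq_apply]; ring
    rw [hre]; linarith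
  have hpi : Continuous (fun t : ℝ => (Real.pi : ℂ) ^ (-2 * (2 + (t:ℝ)*I))) := by
    apply Continuous.const_cpow
    · exact continuous_const.mul (continuous_const.add (Complex.continuous_ofReal.mul continuous_const))
    · left; exact_mod_cast Real.pi_ne_zero
  unfold gfun
  exact (hpi.mul ((((hGam α hα).mul (hGam β hβ)).mul (hGam γ hγ)).mul (hGam δ hδ))).div_const _

end Aux

/-- The diagonal sum equals a contour integral of `Z_{α,β,γ,δ}(a,b,s)`. -/
theorem diagonal_eq_contour (q a b : ℕ) (hq : 0 < q) (ha : 0 < a) (hb : 0 < b)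
    (hab : Nat.Coprime a b) (α β γ δ : ℂ)
    (hα : |α.re| < 1/4) (hβ : |β.re| < 1/4) (hγ : |γ.re| < 1/4) (hδ : |δ.re| < 1/4)
    (G : ℂ → ℂ) (hG : Differentiable ℂ G) (hGeven : ∀ s, G (-s) = G s)
    (hG0 : G 0 = 1) (hGdecay : ExpDecayStrips G) :
    Summable (fun p : ℕ × ℕ => if p.1 * a = p.2 * b then
        sigmaC α β p.1 * sigmaC γ δ p.2 * ((p.1 * p.2 : ℕ) : ℂ) ^ (-(1 : ℂ)/2) *
          Vfun G α β γ δ ((p.1 * p.2 : ℕ) / (q : ℝ) ^ 2) else 0) ∧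
    (∀ t : ℝ, Summable (Zterm α β γ δ a b (2 + t * I))) ∧
    (∑' p : ℕ × ℕ, if p.1 * a = p.2 * b then
        sigmaC α β p.1 * sigmaC γ δ p.2 * ((p.1 * p.2 : ℕ) : ℂ) ^ (-(1 : ℂ)/2) *
          Vfun G α β γ δ ((p.1 * p.2 : ℕ) / (q : ℝ) ^ 2) else 0) =
      (1 / (2 * (Real.pi : ℂ) * I)) *
        (I * ∫ t : ℝ, (G (2 + t * I) / (2 + t * I)) * gfun α β γ δ (2 + t * I) *
          (q : ℂ) ^ (2 * (2 + t * I)) * ∑' n : ℕ, Zterm α β γ δ a b (2 + t * I) n) := by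
  classical
  have hαl : -(1/4) < α.re := by have := abs_lt.mp hα; linarith [this.1]
  have hβl : -(1/4) < β.re := by have := abs_lt.mp hβ; linarith [this.1]
  have hγl : -(1/4) < γ.re := by have := abs_lt.mp hγ; linarith [this.1]
  have hδl : -(1/4) < δ.re := by have := abs_lt.mp hδ; linarith [this.1]
  -- Z-series summability
  set Kz : ℝ := (a:ℝ)^(3/2:ℝ) * (b:ℝ)^(3/2:ℝ) * (a:ℝ)^(-(5/2):ℝ) * (b:ℝ)^(-(5/2):ℝ) with hKzdef
  have hZb : ∀ (t : ℝ) (n : ℕ), ‖Zterm α β γ δ a b (2 + t*I) n‖ ≤ Kz * (n:ℝ)^(-2:ℝ) :=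
    fun t n => Zterm_bound hα hβ hγ hδ ha hb t n
  have hsumKz : Summable (fun n : ℕ => Kz * (n:ℝ)^(-2:ℝ)) :=
    (Real.summable_nat_rpow.mpr (by norm_num)).mul_left Kz
  have hZsum : ∀ t : ℝ, Summable (Zterm α β γ δ a b (2 + t*I)) :=
    fun t => Summable.of_norm_bounded hsumKz (hZb t)
  -- decay data and bounds for F
  obtain ⟨A, hA, c, hc, hGbd⟩ := hGdecay 2 (by norm_num)
  set Cg : ℝ := CgBound α β γ δ with hCgdef
  have hCg0 : 0 ≤ Cg := CgBound_nonneg α β γ δ hαl hβl hγl hδl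
  set F : ℝ → ℂ := fun t => G (2 + t * I) / (2 + t * I) * gfun α β γ δ (2 + t * I) with hFdef
  set Eb : ℝ → ℝ := fun t => A * Real.exp (-c * |t|) / 2 * Cg with hEbdef
  have hEb0 : ∀ t : ℝ, 0 ≤ Eb t := fun t =>
    mul_nonneg (div_nonneg (mul_nonneg hA.le (Real.exp_pos _).le) (by norm_num)) hCg0
  have hEbInt : Integrable Eb := (((myIntegrableExp hc).const_mul A).div_const 2).mul_const Cg
  have hzne : ∀ t : ℝ, (2 + (t:ℝ)*I : ℂ) ≠ 0 := by
    intro t h0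
    have := congrArg Complex.re h0
    simp at this
  have hznorm : ∀ t : ℝ, (2:ℝ) ≤ ‖(2 + (t:ℝ)*I : ℂ)‖ := by
    intro t
    have h := Complex.abs_re_le_norm (2 + (t:ℝ)*I)
    simpa using h
  have hGt : ∀ t : ℝ, ‖G (2 + (t:ℝ)*I)‖ ≤ A * Real.exp (-c * |t|) := by
    intro t
    have h := hGbd (2 + (t:ℝ)*I) (by simp)
    simpa using h
  have hFbd : ∀ t : ℝ, ‖F t‖ ≤ Eb t := by
    intro t
    simp only [hFdef, hEbdef]
    calc ‖G (2 + (t:ℝ)*I) / (2 + (t:ℝ)*I) * gfun α β γ δ (2 + (t:ℝ)*I)‖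
        = ‖G (2 + (t:ℝ)*I)‖ / ‖(2 + (t:ℝ)*I : ℂ)‖ * ‖gfun α β γ δ (2 + (t:ℝ)*I)‖ := by
          rw [norm_mul, norm_div]
      _ ≤ A * Real.exp (-c * |t|) / 2 * Cg := by
          refine mul_le_mul ?_ (norm_gfun_le α β γ δ hαl hβl hγl hδl t) (norm_nonneg _)
            (div_nonneg (mul_nonneg hA.le (Real.exp_pos _).le) (by norm_num))
          exact div_le_div₀ (mul_nonneg hA.le (Real.exp_pos _).le) (hGt t) (by norm_num) (hznorm t)
  have hline : Continuous (fun t : ℝ => (2 + (t:ℝ)*I : ℂ)) :=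
    continuous_const.add (Complex.continuous_ofReal.mul continuous_const)
  have hFcont : Continuous F := by
    simp only [hFdef]
    exact ((hG.continuous.comp hline).div hline hzne).mul
      (gfun_continuous α β γ δ hαl hβl hγl hδl)
  -- the doubly-indexed integrand
  set h : ℕ → ℝ → ℂ := fun k t =>
    F t * ((q:ℂ)^(2*(2 + (t:ℝ)*I)) * Zterm α β γ δ a b (2 + t*I) k) with hhdef
  have hq4 : ∀ t : ℝ, ‖(q:ℂ)^(2*(2 + (t:ℝ)*I))‖ = (q:ℝ)^(4:ℝ) := by
    intro t
    rw [norm_natCast_cpow_of_pos hq]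
    congr 1
    simp; norm_num
  have hWbd : ∀ (k : ℕ) (t : ℝ), ‖h k t‖ ≤ Eb t * ((q:ℝ)^(4:ℝ) * (Kz * (k:ℝ)^(-2:ℝ))) := by
    intro k t
    simp only [hhdef]
    rw [norm_mul]
    refine mul_le_mul (hFbd t) ?_ (norm_nonneg _) (hEb0 t)
    rw [norm_mul, hq4 t]
    exact mul_le_mul_of_nonneg_left (hZb t k) (by positivity)
  have hhcont : ∀ k : ℕ, Continuous (h k) := by
    intro k
    simp only [hhdef]
    apply hFcont.mul
    apply Continuous.mul
    · refine Continuous.const_cpow (continuous_const.mul hline) (Or.inl ?_)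
      exact_mod_cast hq.ne'
    · unfold Zterm
      have ca : Continuous (fun t : ℝ => (a:ℂ)^(-(1/2 + (2 + (t:ℝ)*I)))) :=
        Continuous.const_cpow ((continuous_const.add hline).neg)
          (Or.inl (by exact_mod_cast ha.ne'))
      have cb : Continuous (fun t : ℝ => (b:ℂ)^(-(1/2 + (2 + (t:ℝ)*I)))) :=
        Continuous.const_cpow ((continuous_const.add hline).neg)
          (Or.inl (by exact_mod_cast hb.ne'))
      have ck : Continuous (fun t : ℝ => (k:ℂ)^(-(1 + 2*(2 + (t:ℝ)*I)))) := by
        refine Continuous.const_cpow ((continuous_const.add (continuous_const.mul hline)).neg)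
          (Or.inr ?_)
        intro t h0
        have h1 := congrArg Complex.re h0
        simp only [Complex.zero_re] at h1
        rw [show (-(1 + 2*(2 + (t:ℝ)*I))).re = -(5:ℝ) from by simp; norm_num] at h1
        norm_num at h1
      exact ((continuous_const.mul ca).mul cb).mul ck
  have hhint : ∀ k : ℕ, Integrable (h k) := fun k =>
    Integrable.mono' (hEbInt.mul_const _) ((hhcont k).aestronglyMeasurable)
      (Filter.Eventually.of_forall (hWbd k))
  have hJle : ∀ k : ℕ, (∫ t : ℝ, ‖h k t‖) ≤ (∫ t : ℝ, Eb t) * ((q:ℝ)^(4:ℝ) * (Kz * (k:ℝ)^(-2:ℝ))) := by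
    intro k
    rw [← integral_mul_const]
    exact integral_mono (hhint k).norm (hEbInt.mul_const _) (hWbd k)
  have hJsum : Summable (fun k : ℕ => ∫ t : ℝ, ‖h k t‖) :=
    Summable.of_nonneg_of_le (fun k => integral_nonneg fun t => norm_nonneg _) hJle
      ((hsumKz.mul_left _).mul_left _)
  -- reindexing along the diagonal
  set ι : ℕ → ℕ × ℕ := fun k => (b*k, a*k) with hιdef
  have hinj : Function.Injective ι := by
    intro k1 k2 hk
    simp only [hιdef, Prod.mk.injEq] at hk
    exact Nat.eq_of_mul_eq_mul_left hb hk.1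
  set f : ℕ × ℕ → ℂ := fun p : ℕ × ℕ => if p.1 * a = p.2 * b then
      sigmaC α β p.1 * sigmaC γ δ p.2 * ((p.1 * p.2 : ℕ) : ℂ) ^ (-(1 : ℂ)/2) *
        Vfun G α β γ δ ((p.1 * p.2 : ℕ) / (q : ℝ) ^ 2) else 0 with hfdef
  have hsupp : ∀ p : ℕ × ℕ, p ∉ Set.range ι → f p = 0 := by
    intro p hp
    simp only [hfdef]
    rw [if_neg]
    intro hcond
    apply hp
    have hdvd : b ∣ p.1 :=
      Nat.Coprime.dvd_of_dvd_mul_right hab.symm ⟨p.2, by rw [hcond, mul_comm]⟩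
    obtain ⟨k, hk⟩ := hdvd
    refine ⟨k, ?_⟩
    have h2 : a * k = p.2 := by
      have hh2 : (a*k) * b = p.2 * b := by rw [← hcond, hk]; ring
      exact Nat.eq_of_mul_eq_mul_right hb hh2
    simp only [hιdef, Prod.ext_iff]
    exact ⟨hk.symm, h2⟩
  have hcomp : ∀ k : ℕ, f (ι k) =
      sigmaC α β (b*k) * sigmaC γ δ (a*k) * ((b*k*(a*k) : ℕ) : ℂ) ^ (-(1:ℂ)/2) *
        Vfun G α β γ δ (((b*k*(a*k) : ℕ) : ℝ) / (q:ℝ)^2) := by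
    intro k
    simp only [hfdef, hιdef]
    rw [if_pos (by ring)]
  have hVeq : ∀ k : ℕ, f (ι k) = (1 / (2 * (Real.pi:ℂ) * I)) * (I * ∫ t : ℝ, h k t) := by
    intro k
    have h1 : (∫ t : ℝ, h k t) =
        (sigmaC α β (b*k) * sigmaC γ δ (a*k) * ((b*k*(a*k) : ℕ) : ℂ) ^ (-(1:ℂ)/2)) *
          ∫ t : ℝ, (G (2 + t*I) / (2 + t*I)) * gfun α β γ δ (2 + t*I) *
            (((((b*k*(a*k) : ℕ) : ℝ) / (q:ℝ)^2 : ℝ)) : ℂ) ^ (-(2 + t*I)) := by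
      rw [← integral_const_mul]
      refine integral_congr_ae (Filter.Eventually.of_forall fun t => ?_)
      simp only [hhdef, hFdef]
      have hk2 := key_identity ha hb hq α β γ δ k (2 + (t:ℝ)*I)
      linear_combination (-(G (2 + (t:ℝ)*I) / (2 + (t:ℝ)*I) * gfun α β γ δ (2 + (t:ℝ)*I))) * hk2
    rw [hcomp k]
    simp only [Vfun]
    rw [h1]
    ring
  have hnormle : ∀ k : ℕ, ‖f (ι k)‖ ≤ ‖(1 / (2 * (Real.pi:ℂ) * I) : ℂ)‖ * ∫ t : ℝ, ‖h k t‖ := by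
    intro k
    rw [hVeq k, norm_mul, norm_mul, Complex.norm_I, one_mul]
    exact mul_le_mul_of_nonneg_left (norm_integral_le_integral_norm _) (norm_nonneg _)
  have hsumι : Summable (f ∘ ι) :=
    Summable.of_norm_bounded (hJsum.mul_left _) hnormle
  have hsumf : Summable f := (Function.Injective.summable_iff hinj hsupp).mp hsumι
  refine ⟨hsumf, hZsum, ?_⟩
  have htsum : ∑' p : ℕ × ℕ, f p = ∑' k : ℕ, f (ι k) :=
    (Function.Injective.tsum_eq hinj (Function.support_subset_iff'.mpr hsupp)).symm
  calc ∑' p : ℕ × ℕ, f p = ∑' k : ℕ, f (ι k) := htsum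
    _ = ∑' k : ℕ, (1 / (2 * (Real.pi:ℂ) * I)) * (I * ∫ t : ℝ, h k t) := tsum_congr hVeq
    _ = (1 / (2 * (Real.pi:ℂ) * I)) * (I * ∑' k : ℕ, ∫ t : ℝ, h k t) := by
        rw [tsum_mul_left, tsum_mul_left]
    _ = (1 / (2 * (Real.pi:ℂ) * I)) * (I * ∫ t : ℝ, ∑' k : ℕ, h k t) := by
        rw [integral_tsum_of_summable_integral_norm hhint hJsum]
    _ = (1 / (2 * (Real.pi:ℂ) * I)) *
        (I * ∫ t : ℝ, (G (2 + t * I) / (2 + t * I)) * gfun α β γ δ (2 + t * I) *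
          (q : ℂ) ^ (2 * (2 + t * I)) * ∑' n : ℕ, Zterm α β γ δ a b (2 + t * I) n) := by
        congr 2
        refine integral_congr_ae (Filter.Eventually.of_forall fun t => ?_)
        calc ∑' k : ℕ, h k t
            = ∑' k : ℕ, (F t * (q:ℂ)^(2*(2 + (t:ℝ)*I))) * Zterm α β γ δ a b (2 + t*I) k :=
              tsum_congr fun k => by simp only [hhdef]; ring
          _ = (F t * (q:ℂ)^(2*(2 + (t:ℝ)*I))) * ∑' k : ℕ, Zterm α β γ δ a b (2 + t*I) k :=
              tsum_mul_left
          _ = (G (2 + t * I) / (2 + t * I)) * gfun α β γ δ (2 + t * I) *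
              (q : ℂ) ^ (2 * (2 + t * I)) * ∑' n : ℕ, Zterm α β γ δ a b (2 + t * I) n := by
              simp only [hFdef]
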